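/- For nonzero integers a1, b1, a2, b2, a3 and real α, the (2,1)-entry of the matrix A^{a1} B_α^{b1} A^{a2} B_α^{b2} A^{a3} equals a2*b1*b2*α^2 + (b1 + b2)*α, where A = [[1,1],[0,1]] and B_α = [[1,0],[α,1]]. -/

import Mathlib

open Matrix

lemma upper_pow (n : ℤ) : (!![1, 1; 0, 1] : Matrix (Fin 2) (Fin 2) ℝ) ^ n = !![1, (n : ℝ); 0, 1] := by
  have hdet : IsUnit (!![1, 1; 0, 1] : Matrix (Fin 2) (Fin 2) ℝ).det := by
    simp [Matrix.det_fin_two]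
  induction n using Int.induction_on with
  | zero => ext i j; fin_cases i <;> fin_cases j <;> simp
  | succ k ih =>
      rw [Matrix.zpow_add_one hdet, ih]
      ext i j; fin_cases i <;> fin_cases j <;>
        simp [Matrix.mul_apply, Fin.sum_univ_succ] <;> push_cast <;> ring
  | pred k ih =>
      rw [show (-(k : ℤ) - 1) = (-(k : ℤ)) - 1 by ring, Matrix.zpow_sub_one hdet, ih]
      have hinv : (!![1, 1; 0, 1] : Matrix (Fin 2) (Fin 2) ℝ)⁻¹ = !![1, -1; 0, 1] := by
        rw [Matrix.inv_def]
        ext i j; fin_cases i <;> fin_cases j <;>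
          simp [Matrix.adjugate_fin_two, Matrix.det_fin_two]
      rw [hinv]
      ext i j; fin_cases i <;> fin_cases j <;>
        simp [Matrix.mul_apply, Fin.sum_univ_succ] <;> push_cast <;> ring

lemma lower_pow (α : ℝ) (n : ℤ) : (!![1, 0; α, 1] : Matrix (Fin 2) (Fin 2) ℝ) ^ n = !![1, 0; (n : ℝ) * α, 1] := by
  have hdet : IsUnit (!![1, 0; α, 1] : Matrix (Fin 2) (Fin 2) ℝ).det := by
    simp [Matrix.det_fin_two]
  induction n using Int.induction_on with
  | zero => ext i j; fin_cases i <;> fin_cases j <;> simp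
  | succ k ih =>
      rw [Matrix.zpow_add_one hdet, ih]
      ext i j; fin_cases i <;> fin_cases j <;>
        simp [Matrix.mul_apply, Fin.sum_univ_succ] <;> push_cast <;> ring
  | pred k ih =>
      rw [show (-(k : ℤ) - 1) = (-(k : ℤ)) - 1 by ring, Matrix.zpow_sub_one hdet, ih]
      have hinv : (!![1, 0; α, 1] : Matrix (Fin 2) (Fin 2) ℝ)⁻¹ = !![1, 0; -α, 1] := by
        rw [Matrix.inv_def]
        ext i j; fin_cases i <;> fin_cases j <;>
          simp [Matrix.adjugate_fin_two, Matrix.det_fin_two]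
      rw [hinv]
      ext i j; fin_cases i <;> fin_cases j <;>
        simp [Matrix.mul_apply, Fin.sum_univ_succ] <;> push_cast <;> ring

theorem entry_two_one (a1 b1 a2 b2 a3 : ℤ) (ha1 : a1 ≠ 0) (hb1 : b1 ≠ 0)
    (ha2 : a2 ≠ 0) (hb2 : b2 ≠ 0) (ha3 : a3 ≠ 0) (α : ℝ) :
    let A : Matrix (Fin 2) (Fin 2) ℝ := !![1, 1; 0, 1]
    let B : Matrix (Fin 2) (Fin 2) ℝ := !![1, 0; α, 1]
    (A ^ a1 * B ^ b1 * A ^ a2 * B ^ b2 * A ^ a3) 1 0 =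
      (a2 : ℝ) * b1 * b2 * α ^ 2 + ((b1 : ℝ) + b2) * α := by
  intro A B
  rw [show A = !![1, 1; 0, 1] from rfl, show B = !![1, 0; α, 1] from rfl,
    upper_pow, upper_pow, upper_pow, lower_pow, lower_pow]
  simp [Matrix.mul_apply, Fin.sum_univ_succ]
  ring
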